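/- Let h > 0, let x_i ∈ ℝ, x_{i+1} = x_i + h, and let x∘ ∈ (x_i, x_{i+1}). Let ψ⁻ and ψ⁺ be three-times continuously differentiable real functions on an open interval containing [x_i, x_{i+1}], and let M⁻ and M⁺ bound |(ψ⁻)'''| and |(ψ⁺)'''| on [x_i, x_{i+1}]. Define the jump values J_m = (ψ⁺)^{(m)}(x∘) − (ψ⁻)^{(m)}(x∘) for m = 0, 1, 2, and set d⁺ = x_{i+1} − x∘. Then | (ψ⁻)'((x_i + x_{i+1})/2) − (1/h) ( ψ⁺(x_{i+1}) − ψ⁻(x_i) − Σ_{m=0}^{2} (d⁺)^m J_m / m! ) | ≤ (M⁻/24 + (M⁺ + M⁻)/6) h². -/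

import Mathlib

open Set

private lemma iterDW_open {f : ℝ → ℝ} {s : Set ℝ} (hs : IsOpen s) (n : ℕ) {x : ℝ}
    (hx : x ∈ s) : iteratedDerivWithin n f s x = iteratedDeriv n f x := by
  rw [iteratedDerivWithin_eq_iteratedFDerivWithin, iteratedDeriv_eq_iteratedFDeriv,
    iteratedFDerivWithin_of_isOpen n hs hx]

private lemma iterDW_Icc {f : ℝ → ℝ} {a b c d : ℝ} (hf : ContDiffOn ℝ 3 f (Set.Ioo a b))
    (hcd : c < d) (hsub : Set.Icc c d ⊆ Set.Ioo a b) :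
    ∀ n : ℕ, n ≤ 3 → ∀ x ∈ Set.Icc c d,
      iteratedDerivWithin n f (Set.Icc c d) x = iteratedDeriv n f x := by
  intro n
  induction n with
  | zero => intro _ x _; simp
  | succ n ih =>
    intro hn x hx
    have hn' : n ≤ 3 := by omega
    have h1 : DifferentiableOn ℝ (iteratedDerivWithin n f (Set.Ioo a b)) (Set.Ioo a b) :=
      hf.differentiableOn_iteratedDerivWithin (by exact_mod_cast (show n < 3 by omega))
        isOpen_Ioo.uniqueDiffOn
    have h2 : DifferentiableOn ℝ (iteratedDeriv n f) (Set.Ioo a b) :=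
      h1.congr fun y hy => (iterDW_open isOpen_Ioo n hy).symm
    have hdiff : DifferentiableAt ℝ (iteratedDeriv n f) x :=
      h2.differentiableAt (isOpen_Ioo.mem_nhds (hsub hx))
    rw [iteratedDerivWithin_succ,
      derivWithin_congr (fun y hy => ih hn' y hy) (ih hn' x hx),
      hdiff.derivWithin (uniqueDiffOn_Icc hcd x hx), ← iteratedDeriv_succ]

private lemma taylor3_right {f : ℝ → ℝ} {a b c d M : ℝ} (hf : ContDiffOn ℝ 3 f (Set.Ioo a b))
    (hcd : c < d) (hsub : Set.Icc c d ⊆ Set.Ioo a b)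
    (hM : ∀ x ∈ Set.Icc c d, |iteratedDeriv 3 f x| ≤ M) :
    |f d - (f c + deriv f c * (d - c) + iteratedDeriv 2 f c * (d - c) ^ 2 / 2)|
      ≤ M * |d - c| ^ 3 / 6 := by
  have hsubIoo : Set.Ioo c d ⊆ Set.Ioo a b := Set.Ioo_subset_Icc_self.trans hsub
  have hfIcc : ContDiffOn ℝ 2 f (Set.Icc c d) := (hf.of_le (by norm_num)).mono hsub
  have hdiff2 : DifferentiableOn ℝ (iteratedDerivWithin 2 f (Set.Icc c d)) (Set.Ioo c d) := by
    have h1 : DifferentiableOn ℝ (iteratedDerivWithin 2 f (Set.Ioo a b)) (Set.Ioo a b) :=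
      hf.differentiableOn_iteratedDerivWithin (by norm_num) isOpen_Ioo.uniqueDiffOn
    have h2 : DifferentiableOn ℝ (iteratedDeriv 2 f) (Set.Ioo c d) :=
      (h1.congr fun y hy => (iterDW_open isOpen_Ioo 2 hy).symm).mono hsubIoo
    exact h2.congr fun y hy =>
      iterDW_Icc hf hcd hsub 2 (by norm_num) y (Set.Ioo_subset_Icc_self hy)
  obtain ⟨x', hx', hre⟩ := taylor_mean_remainder_lagrange (n := 2) hcd.ne
    (by rw [Set.uIcc_of_le hcd.le]; exact hfIcc)
    (by rw [Set.uIcc_of_le hcd.le, Set.uIoo_of_le hcd.le]; exact hdiff2)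
  rw [Set.uIcc_of_le hcd.le] at hre
  rw [Set.uIoo_of_le hcd.le] at hx'
  rw [taylor_within_apply] at hre
  have hsum : ∑ k ∈ Finset.range 3, ((Nat.factorial k : ℝ)⁻¹ * (d - c) ^ k) •
      iteratedDerivWithin k f (Set.Icc c d) c
      = f c + deriv f c * (d - c) + iteratedDeriv 2 f c * (d - c) ^ 2 / 2 := by
    rw [Finset.sum_range_succ, Finset.sum_range_succ, Finset.sum_range_one]
    rw [iterDW_Icc hf hcd hsub 0 (by norm_num) c (Set.left_mem_Icc.2 hcd.le),
      iterDW_Icc hf hcd hsub 1 (by norm_num) c (Set.left_mem_Icc.2 hcd.le),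
      iterDW_Icc hf hcd hsub 2 (by norm_num) c (Set.left_mem_Icc.2 hcd.le)]
    simp [Nat.factorial, iteratedDeriv_one]
    ring
  rw [hsum, iterDW_Icc hf hcd hsub 3 le_rfl x' (Set.Ioo_subset_Icc_self hx')] at hre
  rw [hre]
  have hb := hM x' (Set.Ioo_subset_Icc_self hx')
  have hM0 : 0 ≤ M := (abs_nonneg _).trans hb
  have hfact : (((2:ℕ) + 1).factorial : ℝ) = 6 := by norm_num [Nat.factorial]
  rw [hfact, abs_div, abs_of_nonneg (by norm_num : (0:ℝ) ≤ 6), abs_mul, abs_pow]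
  have hmul := mul_le_mul_of_nonneg_right hb (pow_nonneg (abs_nonneg (d - c)) 3)
  linarith

private lemma taylor3_both {f : ℝ → ℝ} {a b lo hi M : ℝ} (hf : ContDiffOn ℝ 3 f (Set.Ioo a b))
    (hsub : Set.Icc lo hi ⊆ Set.Ioo a b)
    (hM : ∀ x ∈ Set.Icc lo hi, |iteratedDeriv 3 f x| ≤ M) {c d : ℝ}
    (hc : c ∈ Set.Icc lo hi) (hd : d ∈ Set.Icc lo hi) :
    |f d - (f c + deriv f c * (d - c) + iteratedDeriv 2 f c * (d - c) ^ 2 / 2)|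
      ≤ M * |d - c| ^ 3 / 6 := by
  rcases lt_trichotomy c d with hlt | heq | hgt
  · exact taylor3_right hf hlt ((Set.Icc_subset_Icc hc.1 hd.2).trans hsub)
      (fun x hx => hM x (Set.Icc_subset_Icc hc.1 hd.2 hx))
  · subst heq
    simp
  · -- reflection
    set g : ℝ → ℝ := fun t => f (-t) with hgdef
    have hg : ContDiffOn ℝ 3 g (Set.Ioo (-b) (-a)) := by
      apply hf.comp (contDiff_neg.contDiffOn (𝕜 := ℝ) (E := ℝ))
      intro x hx
      simp only [Set.mem_Ioo] at hx ⊢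
      constructor <;> linarith
    have hsub' : Set.Icc (-c) (-d) ⊆ Set.Ioo (-b) (-a) := by
      intro x hx
      simp only [Set.mem_Icc] at hx
      have h1 : -x ∈ Set.Icc lo hi := by
        simp only [Set.mem_Icc]
        exact ⟨by linarith [hd.1], by linarith [hc.2]⟩
      have := hsub h1
      simp only [Set.mem_Ioo] at this ⊢
      constructor <;> linarith
    have hM' : ∀ x ∈ Set.Icc (-c) (-d), |iteratedDeriv 3 g x| ≤ M := by
      intro x hx
      rw [hgdef, iteratedDeriv_comp_neg]
      simp only [Set.mem_Icc] at hx
      have h1 : -x ∈ Set.Icc lo hi := by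
        simp only [Set.mem_Icc]
        exact ⟨by linarith [hd.1], by linarith [hc.2]⟩
      have := hM (-x) h1
      simpa [abs_mul] using this
    have key := taylor3_right hg (by linarith : -c < -d) hsub' hM'
    have e0 : g (-d) = f d := by simp [hgdef]
    have e0' : g (-c) = f c := by simp [hgdef]
    have e1 : deriv g (-c) = -deriv f c := by
      have h1 := iteratedDeriv_comp_neg (𝕜 := ℝ) (F := ℝ) 1 f (-c)
      simp only [iteratedDeriv_one] at h1
      rw [hgdef]
      simpa using h1
    have e2 : iteratedDeriv 2 g (-c) = iteratedDeriv 2 f c := by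
      have h2 := iteratedDeriv_comp_neg (𝕜 := ℝ) (F := ℝ) 2 f (-c)
      rw [hgdef]
      simpa using h2
    rw [e0, e0', e1, e2] at key
    have eq1 : f d - (f c + -deriv f c * (-d - -c) + iteratedDeriv 2 f c * (-d - -c) ^ 2 / 2)
        = f d - (f c + deriv f c * (d - c) + iteratedDeriv 2 f c * (d - c) ^ 2 / 2) := by
      ring
    have eq2 : |(-d : ℝ) - -c| = |d - c| := by
      rw [show (-d : ℝ) - -c = -(d - c) by ring, abs_neg]
    rw [eq1, eq2] at key
    exact key

theorem iim_first_derivative_correction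
    (h xi x1 : ℝ) (hh : 0 < h) (hx1 : x1 = xi + h)
    (xo : ℝ) (hxo : xo ∈ Set.Ioo xi x1)
    (a b : ℝ) (hsub : Set.Icc xi x1 ⊆ Set.Ioo a b)
    (ψm ψp : ℝ → ℝ)
    (hψm : ContDiffOn ℝ 3 ψm (Set.Ioo a b))
    (hψp : ContDiffOn ℝ 3 ψp (Set.Ioo a b))
    (Mm Mp : ℝ)
    (hMm : ∀ x ∈ Set.Icc xi x1, |iteratedDeriv 3 ψm x| ≤ Mm)
    (hMp : ∀ x ∈ Set.Icc xi x1, |iteratedDeriv 3 ψp x| ≤ Mp) :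
    |deriv ψm ((xi + x1) / 2)
        - (1 / h) * (ψp x1 - ψm xi
            - ∑ m ∈ Finset.range 3,
                (x1 - xo) ^ m
                  * (iteratedDeriv m ψp xo - iteratedDeriv m ψm xo)
                  / (Nat.factorial m : ℝ))|
      ≤ (Mm / 24 + (Mp + Mm) / 6) * h ^ 2 := by
  have hxi1 : xi < x1 := by rw [hx1]; linarith
  obtain ⟨hxol, hxor⟩ := hxo
  have hximem : xi ∈ Set.Icc xi x1 := Set.left_mem_Icc.2 hxi1.le
  have hx1mem : x1 ∈ Set.Icc xi x1 := Set.right_mem_Icc.2 hxi1.le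
  have hxomem : xo ∈ Set.Icc xi x1 := ⟨hxol.le, hxor.le⟩
  have hμmem : (xi + x1) / 2 ∈ Set.Icc xi x1 := ⟨by linarith, by linarith⟩
  have hMm0 : 0 ≤ Mm := (abs_nonneg _).trans (hMm xi hximem)
  have hMp0 : 0 ≤ Mp := (abs_nonneg _).trans (hMp xi hximem)
  -- the four Taylor estimates
  have hA1 := taylor3_both hψp hsub hMp hxomem hx1mem
  have hA2 := taylor3_both hψm hsub hMm hxomem hx1mem
  have hA3 := taylor3_both hψm hsub hMm hμmem hx1mem
  have hA4 := taylor3_both hψm hsub hMm hμmem hximem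
  set μ := (xi + x1) / 2 with hμ
  set A1 := ψp x1 - (ψp xo + deriv ψp xo * (x1 - xo) + iteratedDeriv 2 ψp xo * (x1 - xo) ^ 2 / 2)
    with hA1def
  set A2 := ψm x1 - (ψm xo + deriv ψm xo * (x1 - xo) + iteratedDeriv 2 ψm xo * (x1 - xo) ^ 2 / 2)
    with hA2def
  set A3 := ψm x1 - (ψm μ + deriv ψm μ * (x1 - μ) + iteratedDeriv 2 ψm μ * (x1 - μ) ^ 2 / 2)
    with hA3def
  set A4 := ψm xi - (ψm μ + deriv ψm μ * (xi - μ) + iteratedDeriv 2 ψm μ * (xi - μ) ^ 2 / 2)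
    with hA4def
  -- bounds in terms of h
  have habs1 : |x1 - xo| ≤ h := by rw [abs_of_pos (by linarith)]; linarith
  have hB1 : |A1| ≤ Mp * h ^ 3 / 6 := hA1.trans (by gcongr)
  have hB2 : |A2| ≤ Mm * h ^ 3 / 6 := hA2.trans (by gcongr)
  have habs3 : |x1 - μ| = h / 2 := by
    have e : x1 - μ = h / 2 := by rw [hμ, hx1]; ring
    rw [e, abs_of_pos (by linarith)]
  have habs4 : |xi - μ| = h / 2 := by
    have e : xi - μ = -(h / 2) := by rw [hμ, hx1]; ring
    rw [e, abs_neg, abs_of_pos (by linarith)]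
  have hB3 : |A3| ≤ Mm * h ^ 3 / 48 := by
    refine hA3.trans ?_
    rw [habs3]
    exact le_of_eq (by ring)
  have hB4 : |A4| ≤ Mm * h ^ 3 / 48 := by
    refine hA4.trans ?_
    rw [habs4]
    exact le_of_eq (by ring)
  -- the key algebraic identity
  have hkey : deriv ψm μ - (1 / h) * (ψp x1 - ψm xi
      - ∑ m ∈ Finset.range 3, (x1 - xo) ^ m
          * (iteratedDeriv m ψp xo - iteratedDeriv m ψm xo) / (Nat.factorial m : ℝ))
      = -((A1 - A2 + A3 - A4) / h) := by
    rw [Finset.sum_range_succ, Finset.sum_range_succ, Finset.sum_range_one]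
    simp only [iteratedDeriv_zero, iteratedDeriv_one, pow_zero, pow_one, Nat.factorial,
      Nat.cast_one, Nat.cast_ofNat, hA1def, hA2def, hA3def, hA4def]
    have hx1μ : x1 - μ = h / 2 := by rw [hμ, hx1]; ring
    have hxiμ : xi - μ = -(h / 2) := by rw [hμ, hx1]; ring
    rw [hx1μ, hxiμ]
    field_simp
    ring
  rw [hkey, abs_neg, abs_div, abs_of_pos hh]
  rw [div_le_iff₀ hh]
  clear_value A1 A2 A3 A4
  have hsum : |A1 - A2 + A3 - A4| ≤ Mp * h ^ 3 / 6 + Mm * h ^ 3 / 6 + Mm * h ^ 3 / 48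
      + Mm * h ^ 3 / 48 := by
    have p1 := le_abs_self A1; have n1 := neg_abs_le A1
    have p2 := le_abs_self A2; have n2 := neg_abs_le A2
    have p3 := le_abs_self A3; have n3 := neg_abs_le A3
    have p4 := le_abs_self A4; have n4 := neg_abs_le A4
    rw [abs_le]
    constructor <;> linarith
  refine hsum.trans (le_of_eq ?_)
  ring
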